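/- For a finite poc-set P, the map a ↦ V(a) = {u ∈ VΓ(P) : a ∈ u} is an isomorphism of poc-sets from P onto the family {V(a)}_{a∈P} ordered by inclusion with complementation V(a)* = VΓ(P) \ V(a); in particular, a ≤ b in P if and only if V(a) ⊆ V(b). -/
import Mathlib


structure PocSet (P : Type*) [PartialOrder P] where
  zero : P
  zero_le : ∀ a : P, zero ≤ a
  star : P → P
  star_star : ∀ a : P, star (star a) = a
  star_anti : ∀ a b : P, a ≤ b → star b ≤ star a
  eq_zero_of_le_star : ∀ a : P, a ≤ star a → a = zero

namespace PocSet

variable {P : Type*} [PartialOrder P]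

/-- The maximum element `1 = 0*` of a poc-set. -/
def one (S : PocSet P) : P := S.star S.zero

/-- An element is proper if it is neither `0` nor `1`. -/
def Proper (S : PocSet P) (a : P) : Prop := a ≠ S.zero ∧ a ≠ S.one

/-- A subset is coherent if `a ≤ b*` holds for no two of its members. -/
def Coherent (S : PocSet P) (α : Set P) : Prop := ∀ a ∈ α, ∀ b ∈ α, ¬ a ≤ S.star b

/-- A vertex of `Γ(P)`: a coherent `*`-selection. -/
def IsVertex (S : PocSet P) (α : Set P) : Prop :=
  S.Coherent α ∧ ∀ a : P, a ∈ α ↔ S.star a ∉ α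

/-- The metric `Δ(u,v) = |u Δ v| / 2` on vertices. -/
noncomputable def delta (S : PocSet P) (u v : Set P) : ℝ :=
  ((symmDiff u v).ncard : ℝ) / 2

/-- The median of three sets. -/
def med (u v w : Set P) : Set P := (u ∩ v) ∪ (v ∩ w) ∪ (u ∩ w)

end PocSet

/-- A morphism of poc-sets: sends `0` to `0`, preserves order, commutes with `*`. -/
def IsPocMorphism {P Q : Type*} [PartialOrder P] [PartialOrder Q]
    (S : PocSet P) (T : PocSet Q) (f : P → Q) : Prop :=
  f S.zero = T.zero ∧ (∀ a b : P, a ≤ b → f a ≤ f b) ∧ ∀ a : P, f (S.star a) = T.star (f a)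

namespace PocSet

variable {P : Type*} [PartialOrder P]

lemma le_one (S : PocSet P) (a : P) : a ≤ S.one := by
  have := S.star_anti _ _ (S.zero_le (S.star a))
  rwa [S.star_star] at this

lemma zero_not_mem {S : PocSet P} {α : Set P} (hα : S.Coherent α) : S.zero ∉ α := by
  intro h
  exact hα _ h _ h (S.zero_le _)

/-- `one` can always be added to a coherent set (when `one ≠ zero`). -/
lemma coherent_insert_one {S : PocSet P} {α : Set P} (hα : S.Coherent α)
    (h10 : S.one ≠ S.zero) : S.Coherent (insert S.one α) := by
  intro a ha b hb hab
  rcases ha with rfl | ha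
  · rcases hb with rfl | hb
    · have hso : S.star S.one = S.zero := by simp [one, S.star_star]
      rw [hso] at hab
      exact h10 (le_antisymm hab (S.zero_le _))
    · have hb1 : S.star b = S.one := le_antisymm (S.le_one _) hab
      have : b = S.zero := by
        have := congrArg S.star hb1
        rwa [S.star_star, one, S.star_star] at this
      exact zero_not_mem hα (this ▸ hb)
  · rcases hb with rfl | hb
    · have hso : S.star S.one = S.zero := by simp [one, S.star_star]
      rw [hso] at hab
      have : a = S.zero := le_antisymm hab (S.zero_le _)
      exact zero_not_mem hα (this ▸ ha)
    · exact hα _ ha _ hb hab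

/-- A maximal coherent set is a vertex (when `one ≠ zero`). -/
lemma maximal_isVertex {S : PocSet P} {α : Set P}
    (hmax : Maximal (S.Coherent ·) α) (h10 : S.one ≠ S.zero) : S.IsVertex α := by
  have hα := hmax.1
  have hone : S.one ∈ α :=
    hmax.2 (coherent_insert_one hα h10) (Set.subset_insert _ _) (Set.mem_insert _ _)
  refine ⟨hα, fun a => ⟨fun ha hsa => ?_, fun hsa => ?_⟩⟩
  · exact hα _ ha _ hsa (by rw [S.star_star])
  · by_contra ha
    by_cases ha0 : a = S.zero
    · exact hsa (by rwa [ha0])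
    by_cases ha1 : a = S.one
    · exact ha (ha1 ▸ hone)
    -- `α ∪ {a}` is incoherent by maximality, so there is `c ∈ α` with `a ≤ c*`
    have hinsa : ¬ S.Coherent (insert a α) := fun h =>
      ha (hmax.2 h (Set.subset_insert _ _) (Set.mem_insert _ _))
    obtain ⟨c, hc, hac⟩ : ∃ c ∈ α, a ≤ S.star c := by
      by_contra hno
      push_neg at hno
      apply hinsa
      intro x hx y hy hxy
      rcases hx with rfl | hx
      · rcases hy with rfl | hy
        · exact ha0 (S.eq_zero_of_le_star _ hxy)
        · exact hno _ hy hxy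
      · rcases hy with heq | hy
        · subst heq
          have h2 := S.star_anti _ _ hxy
          rw [S.star_star] at h2
          exact hno _ hx h2
        · exact hα _ hx _ hy hxy
    -- `α ∪ {a*}` is incoherent, so there is `d ∈ α` with `d ≤ a`
    have hinssa : ¬ S.Coherent (insert (S.star a) α) := fun h =>
      hsa (hmax.2 h (Set.subset_insert _ _) (Set.mem_insert _ _))
    obtain ⟨d, hd, hda⟩ : ∃ d ∈ α, d ≤ a := by
      by_contra hno
      push_neg at hno
      apply hinssa
      intro x hx y hy hxy
      rcases hx with rfl | hx
      · rcases hy with rfl | hy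
        · rw [S.star_star] at hxy
          have : S.star a = S.zero := S.eq_zero_of_le_star _ (by rwa [S.star_star])
          apply ha1
          have := congrArg S.star this
          rwa [S.star_star] at this
        · have : y ≤ a := by
            have := S.star_anti _ _ hxy
            rwa [S.star_star, S.star_star] at this
          exact hno _ hy this
      · rcases hy with rfl | hy
        · rw [S.star_star] at hxy
          exact hno _ hx hxy
        · exact hα _ hx _ hy hxy
    exact hα _ hd _ hc (le_trans hda hac)

/-- Any coherent set extends to a vertex (when `one ≠ zero`). -/
lemma exists_vertex_superset {S : PocSet P} {α₀ : Set P} (h₀ : S.Coherent α₀)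
    (h10 : S.one ≠ S.zero) : ∃ α, α₀ ⊆ α ∧ S.IsVertex α := by
  obtain ⟨m, hm, hmax⟩ := zorn_subset_nonempty {α | S.Coherent α}
    (fun c hc hchain _ => ⟨⋃₀ c, fun x hx y hy hxy => by
      obtain ⟨s, hs, hxs⟩ := hx
      obtain ⟨t, ht, hyt⟩ := hy
      rcases hchain.total hs ht with h | h
      · exact hc ht _ (h hxs) _ hyt hxy
      · exact hc hs _ hxs _ (h hyt) hxy,
      fun s hs => Set.subset_sUnion_of_mem hs⟩) α₀ h₀
  exact ⟨m, hm, maximal_isVertex hmax h10⟩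

/-- Separation: if `¬ a ≤ b` there is a vertex containing `a` but not `b`. -/
lemma exists_vertex_sep {S : PocSet P} {a b : P} (hab : ¬ a ≤ b) :
    ∃ α, S.IsVertex α ∧ a ∈ α ∧ b ∉ α := by
  have h10 : S.one ≠ S.zero := by
    intro h
    exact hab (le_trans (S.le_one a) (h ▸ S.zero_le b))
  have ha0 : a ≠ S.zero := fun h => hab (h ▸ S.zero_le b)
  have h₀ : S.Coherent {a, S.star b} := by
    intro x hx y hy hxy
    rcases hx with rfl | rfl <;> rcases hy with rfl | rfl
    · exact ha0 (S.eq_zero_of_le_star _ hxy)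
    · rw [S.star_star] at hxy; exact hab hxy
    · have := S.star_anti _ _ hxy
      rw [S.star_star, S.star_star] at this
      exact hab this
    · rw [S.star_star] at hxy
      have : S.star b = S.zero := S.eq_zero_of_le_star _ (by rwa [S.star_star])
      have hb1 : b = S.one := by
        have := congrArg S.star this
        rwa [S.star_star] at this
      exact hab (hb1 ▸ S.le_one a)
  obtain ⟨α, hsub, hv⟩ := exists_vertex_superset h₀ h10
  refine ⟨α, hv, hsub (Set.mem_insert _ _), fun hb => ?_⟩
  have hsb : S.star b ∈ α := hsub (by simp)
  exact hv.1 _ hb _ hsb (by rw [S.star_star])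

end PocSet

theorem stmt18 {P : Type*} [PartialOrder P] [Finite P] (S : PocSet P) :
    Function.Injective
      (fun a : P => {u : {α : Set P // S.IsVertex α} | a ∈ u.1}) ∧
    (∀ a b : P, a ≤ b ↔
      {u : {α : Set P // S.IsVertex α} | a ∈ u.1} ⊆
        {u : {α : Set P // S.IsVertex α} | b ∈ u.1}) ∧
    (∀ a : P, {u : {α : Set P // S.IsVertex α} | S.star a ∈ u.1} =
      Set.univ \ {u : {α : Set P // S.IsVertex α} | a ∈ u.1}) := by
  have key : ∀ a b : P, a ≤ b ↔
      {u : {α : Set P // S.IsVertex α} | a ∈ u.1} ⊆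
        {u : {α : Set P // S.IsVertex α} | b ∈ u.1} := by
    intro a b
    constructor
    · intro hab u hu
      simp only [Set.mem_setOf_eq] at hu ⊢
      by_contra hb
      have hsb : S.star b ∈ u.1 := (not_iff_not.mpr (u.2.2 b)).mp hb |> not_not.mp
      exact u.2.1 _ hu _ hsb (by rw [S.star_star]; exact hab)
    · intro h
      by_contra hab
      obtain ⟨α, hv, haα, hbα⟩ := PocSet.exists_vertex_sep hab
      have := h (show (⟨α, hv⟩ : {α : Set P // S.IsVertex α}) ∈
        {u : {α : Set P // S.IsVertex α} | a ∈ u.1} from haα)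
      exact hbα this
  refine ⟨?_, key, ?_⟩
  · intro a b hab
    simp only [Set.ext_iff, Set.mem_setOf_eq] at hab
    exact le_antisymm ((key a b).mpr fun u hu => (hab u).mp hu)
      ((key b a).mpr fun u hu => (hab u).mpr hu)
  · intro a
    ext u
    simp only [Set.mem_setOf_eq, Set.mem_diff, Set.mem_univ, true_and]
    exact ⟨fun h ha => (u.2.2 a).mp ha h, fun h => not_not.mp ((not_iff_not.mpr (u.2.2 a)).mp h)⟩
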